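/- (Lyapunov descent at the disease-free equilibrium, core of Theorem 4.1) Assume R₀₁ < 1 and R₀₂ < 1, and set C₁ = 1/(ω+ω₁+m+r₁) − mω(μ+ω+α)/((ω+ω₂+r₂)[−(ω+ω₁+m+r₁)ω(μ+ω+α)+β₁B(μ+ω)+(1−σ)β₁αB]) and C₂ = 1/(ω+ω₂+r₂). Then C₁ > 0 and C₂ > 0, and for all S, V, I₁, I₂ ≥ 0 with S + (1−σ)V ≤ S₀ + (1−σ)V₀ one has C₁·[−(ω+ω₁+m+r₁)I₁ + β₁(S+(1−σ)V)I₁] + C₂·[−(ω+ω₂+r₂)I₂ + mI₁ + β₂(S+(1−σ)V)I₂] ≤ (R₀₁−1)I₁ + (R₀₂−1)I₂ ≤ 0. -/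

import Mathlib

/-- Lyapunov descent at the disease-free equilibrium (core of Theorem 4.1):
if R₀₁ < 1 and R₀₂ < 1, the coefficients C₁, C₂ of the linear Lyapunov
function L₀ = C₁I₁ + C₂I₂ are positive and its derivative along the vector
field is at most (R₀₁−1)I₁ + (R₀₂−1)I₂ ≤ 0 on the relevant region. -/
lemma lyapunov_aux_frac (a b d e m : ℝ) (ha : a ≠ 0) (hb : b ≠ 0)
    (hd : d ≠ 0) (he : e ≠ 0) :
    (1 / a - m * d / (b * e)) * (e / d) = e / (a * d) - m / b := by
  field_simp

theorem lyapunov_descent_dfe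
    (B ω β₁ β₂ α μ δ σ ω₁ ω₂ m r₁ r₂ : ℝ)
    (hB : 0 < B) (hω : 0 < ω) (hβ₁ : 0 < β₁) (hβ₂ : 0 < β₂) (hα : 0 < α)
    (hμ : 0 < μ) (hδ : 0 < δ) (hσ : σ ∈ Set.Ioo (0 : ℝ) 1)
    (hω₁ : 0 < ω₁) (hω₂ : 0 < ω₂) (hm : 0 < m) (hr₁ : 0 < r₁) (hr₂ : 0 < r₂)
    (S₀ V₀ R₀₁ R₀₂ C₁ C₂ : ℝ)
    (hS₀ : S₀ = B * (μ + ω) / (ω * (μ + ω + α)))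
    (hV₀ : V₀ = α * B / (ω * (μ + ω + α)))
    (hR₀₁ : R₀₁ = β₁ * (B * (μ + ω) + (1 - σ) * α * B) /
      ((ω + ω₁ + m + r₁) * ω * (μ + ω + α)))
    (hR₀₂ : R₀₂ = β₂ * (B * (μ + ω) + (1 - σ) * α * B) /
      ((ω + ω₂ + r₂) * ω * (μ + ω + α)))
    (hlt₁ : R₀₁ < 1) (hlt₂ : R₀₂ < 1)
    (hC₁ : C₁ = 1 / (ω + ω₁ + m + r₁) -
      m * ω * (μ + ω + α) /
        ((ω + ω₂ + r₂) *
          (-((ω + ω₁ + m + r₁) * ω * (μ + ω + α)) + β₁ * B * (μ + ω) +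
            (1 - σ) * β₁ * α * B)))
    (hC₂ : C₂ = 1 / (ω + ω₂ + r₂)) :
    0 < C₁ ∧ 0 < C₂ ∧
    ∀ S V I₁ I₂ : ℝ, 0 ≤ S → 0 ≤ V → 0 ≤ I₁ → 0 ≤ I₂ →
      S + (1 - σ) * V ≤ S₀ + (1 - σ) * V₀ →
      C₁ * (-(ω + ω₁ + m + r₁) * I₁ + β₁ * (S + (1 - σ) * V) * I₁) +
          C₂ * (-(ω + ω₂ + r₂) * I₂ + m * I₁ + β₂ * (S + (1 - σ) * V) * I₂)
        ≤ (R₀₁ - 1) * I₁ + (R₀₂ - 1) * I₂ ∧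
      (R₀₁ - 1) * I₁ + (R₀₂ - 1) * I₂ ≤ 0 := by
  obtain ⟨hσ0, hσ1⟩ := hσ
  have hk₁ : 0 < ω + ω₁ + m + r₁ := by linarith
  have hk₂ : 0 < ω + ω₂ + r₂ := by linarith
  have hμωα : 0 < μ + ω + α := by linarith
  have hD : 0 < ω * (μ + ω + α) := by positivity
  have h1σ : 0 < 1 - σ := by linarith
  have hN : 0 < B * (μ + ω) + (1 - σ) * α * B := by
    nlinarith [mul_pos hB (by linarith : (0:ℝ) < μ + ω),
      mul_pos (mul_pos h1σ hα) hB]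
  have hβ₁N : β₁ * (B * (μ + ω) + (1 - σ) * α * B) <
      (ω + ω₁ + m + r₁) * ω * (μ + ω + α) := by
    have hd : 0 < (ω + ω₁ + m + r₁) * ω * (μ + ω + α) := by positivity
    have := (div_lt_one hd).mp (hR₀₁ ▸ hlt₁)
    linarith
  have hβ₂N : β₂ * (B * (μ + ω) + (1 - σ) * α * B) <
      (ω + ω₂ + r₂) * ω * (μ + ω + α) := by
    have hd : 0 < (ω + ω₂ + r₂) * ω * (μ + ω + α) := by positivity
    have := (div_lt_one hd).mp (hR₀₂ ▸ hlt₂)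
    linarith
  have hinner : -((ω + ω₁ + m + r₁) * ω * (μ + ω + α)) + β₁ * B * (μ + ω) +
      (1 - σ) * β₁ * α * B < 0 := by nlinarith
  have hden : (ω + ω₂ + r₂) *
      (-((ω + ω₁ + m + r₁) * ω * (μ + ω + α)) + β₁ * B * (μ + ω) +
        (1 - σ) * β₁ * α * B) < 0 := mul_neg_of_pos_of_neg hk₂ hinner
  have hC₁pos : 0 < C₁ := by
    have ht : m * ω * (μ + ω + α) /
        ((ω + ω₂ + r₂) *
          (-((ω + ω₁ + m + r₁) * ω * (μ + ω + α)) + β₁ * B * (μ + ω) +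
            (1 - σ) * β₁ * α * B)) < 0 :=
      div_neg_of_pos_of_neg (by positivity) hden
    have h0 : 0 < 1 / (ω + ω₁ + m + r₁) := by positivity
    rw [hC₁]; linarith
  have hC₂pos : 0 < C₂ := by rw [hC₂]; positivity
  refine ⟨hC₁pos, hC₂pos, ?_⟩
  intro S V I₁ I₂ hS hV hI₁ hI₂ hX
  have hX0 : S₀ + (1 - σ) * V₀ =
      (B * (μ + ω) + (1 - σ) * α * B) / (ω * (μ + ω + α)) := by
    rw [hS₀, hV₀]; field_simp
  have hX' : S + (1 - σ) * V ≤
      (B * (μ + ω) + (1 - σ) * α * B) / (ω * (μ + ω + α)) := by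
    rw [← hX0]; exact hX
  set X := S + (1 - σ) * V with hXdef
  set Y := (B * (μ + ω) + (1 - σ) * α * B) / (ω * (μ + ω + α)) with hYdef
  have id₂ : C₂ * (-(ω + ω₂ + r₂) +
      β₂ * ((B * (μ + ω) + (1 - σ) * α * B) / (ω * (μ + ω + α)))) = R₀₂ - 1 := by
    rw [hC₂, hR₀₂]
    field_simp
    ring
  have h1 : (ω + ω₁ + m + r₁) ≠ 0 := ne_of_gt hk₁
  have h2 : (ω + ω₂ + r₂) ≠ 0 := ne_of_gt hk₂
  have h3 : ω * (μ + ω + α) ≠ 0 := ne_of_gt hD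
  have h4 : -((ω + ω₁ + m + r₁) * ω * (μ + ω + α)) + β₁ * B * (μ + ω) +
      (1 - σ) * β₁ * α * B ≠ 0 := ne_of_lt hinner
  have e1 : -(ω + ω₁ + m + r₁) +
      β₁ * ((B * (μ + ω) + (1 - σ) * α * B) / (ω * (μ + ω + α))) =
      (-((ω + ω₁ + m + r₁) * ω * (μ + ω + α)) + β₁ * B * (μ + ω) +
        (1 - σ) * β₁ * α * B) / (ω * (μ + ω + α)) := by
    field_simp
    ring
  have e2 : C₁ * ((-((ω + ω₁ + m + r₁) * ω * (μ + ω + α)) + β₁ * B * (μ + ω) +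
        (1 - σ) * β₁ * α * B) / (ω * (μ + ω + α))) =
      (-((ω + ω₁ + m + r₁) * ω * (μ + ω + α)) + β₁ * B * (μ + ω) +
        (1 - σ) * β₁ * α * B) / ((ω + ω₁ + m + r₁) * (ω * (μ + ω + α))) -
      m / (ω + ω₂ + r₂) := by
    have hC₁' : C₁ = 1 / (ω + ω₁ + m + r₁) -
        m * (ω * (μ + ω + α)) /
          ((ω + ω₂ + r₂) *
            (-((ω + ω₁ + m + r₁) * ω * (μ + ω + α)) + β₁ * B * (μ + ω) +
              (1 - σ) * β₁ * α * B)) := by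
      rw [hC₁, mul_assoc]
    rw [hC₁']
    exact lyapunov_aux_frac _ _ _ _ _ h1 h2 h3 h4
  have e3 : (-((ω + ω₁ + m + r₁) * ω * (μ + ω + α)) + β₁ * B * (μ + ω) +
        (1 - σ) * β₁ * α * B) / ((ω + ω₁ + m + r₁) * (ω * (μ + ω + α))) =
      R₀₁ - 1 := by
    rw [hR₀₁]
    field_simp
    ring
  have id₁ : C₁ * (-(ω + ω₁ + m + r₁) +
      β₁ * ((B * (μ + ω) + (1 - σ) * α * B) / (ω * (μ + ω + α)))) + C₂ * m
      = R₀₁ - 1 := by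
    rw [e1, e2, e3, hC₂]
    field_simp
    ring
  have hmul₁ : C₁ * β₁ * (S + (1 - σ) * V) ≤
      C₁ * β₁ * ((B * (μ + ω) + (1 - σ) * α * B) / (ω * (μ + ω + α))) :=
    mul_le_mul_of_nonneg_left hX' (mul_pos hC₁pos hβ₁).le
  have hmul₂ : C₂ * β₂ * (S + (1 - σ) * V) ≤
      C₂ * β₂ * ((B * (μ + ω) + (1 - σ) * α * B) / (ω * (μ + ω + α))) :=
    mul_le_mul_of_nonneg_left hX' (mul_pos hC₂pos hβ₂).le
  have hkey₁ : C₁ * (-(ω + ω₁ + m + r₁) + β₁ * (S + (1 - σ) * V)) + C₂ * m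
      ≤ R₀₁ - 1 := by linarith only [hmul₁, id₁]
  have hkey₂ : C₂ * (-(ω + ω₂ + r₂) + β₂ * (S + (1 - σ) * V)) ≤ R₀₂ - 1 := by
    linarith only [hmul₂, id₂]
  constructor
  · have h1 := mul_le_mul_of_nonneg_left hkey₁ hI₁
    have h2 := mul_le_mul_of_nonneg_left hkey₂ hI₂
    rw [hXdef]
    linarith only [h1, h2]
  · have h1 : (R₀₁ - 1) * I₁ ≤ 0 :=
      mul_nonpos_of_nonpos_of_nonneg (by linarith) hI₁
    have h2 : (R₀₂ - 1) * I₂ ≤ 0 :=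
      mul_nonpos_of_nonpos_of_nonneg (by linarith) hI₂
    linarith
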